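/- Let b ∈ ℂ and f : ℤ → ℂ satisfy (m + 2n)·f(m) - (n + 2m)·f(n) = (m-n)·(f(m+n) - b²·n·m) for all m, n ∈ ℤ (the case λ = -2). Then f(m) = (1/6)·(m³ - m)·f(2) - (1/3)·(m³ - 4m)·f(1) + (b²/3)·m·(m-2)·(m-1) for all m ∈ ℤ. -/

import Mathlib

theorem stmt_11 (b : ℂ) (f : ℤ → ℂ)
    (h : ∀ m n : ℤ,
      ((m : ℂ) + 2 * (n : ℂ)) * f m - ((n : ℂ) + 2 * (m : ℂ)) * f n
        = ((m : ℂ) - (n : ℂ)) * (f (m + n) - b ^ 2 * (n : ℂ) * (m : ℂ))) :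
    ∀ m : ℤ, f m = (1 / 6) * ((m : ℂ) ^ 3 - (m : ℂ)) * f 2
      - (1 / 3) * ((m : ℂ) ^ 3 - 4 * (m : ℂ)) * f 1
      + (b ^ 2 / 3) * (m : ℂ) * ((m : ℂ) - 2) * ((m : ℂ) - 1) := by
  have f0 : f 0 = 0 := by
    have h10 := h 1 0
    norm_num at h10
    exact h10
  have fneg1 : f (-1) = -f 1 - 2 * b ^ 2 := by
    have e := h 1 (-1)
    norm_num [f0] at e
    linear_combination -e
  have fneg2 : f (-2) = -f 2 - 8 * b ^ 2 := by
    have e := h 2 (-2)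
    norm_num [f0] at e
    linear_combination (-1/2 : ℂ) * e
  intro m
  induction m using Int.induction_on with
  | zero => norm_num [f0]
  | succ i ih =>
    match i, ih with
    | 0, ih => norm_num
    | 1, ih => norm_num
    | (i+2), ih =>
      have hne : ((i:ℂ) + 1) ≠ 0 := by exact_mod_cast Nat.succ_ne_zero i
      have E := h ((i:ℤ)+2) 1
      push_cast at E ih ⊢
      have h1 : ((i:ℤ)+2)+1 = (i:ℤ)+2+1 := by ring
      rw [h1] at E
      apply mul_left_cancel₀ hne
      linear_combination (-1 : ℂ) * E + ((i:ℂ) + 4) * ih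
  | pred i ih =>
    match i, ih with
    | 0, ih => norm_num; linear_combination fneg1
    | 1, ih =>
      have e2 : (-(1:ℤ) - 1 : ℤ) = -2 := by norm_num
      norm_num [e2, fneg2]
      ring
    | (i+2), ih =>
      have hpos : ((i:ℂ) + 1) ≠ 0 := by exact_mod_cast Nat.succ_ne_zero i
      have hne : (-(i:ℂ) - 1) ≠ 0 := by
        intro hc; apply hpos; linear_combination -hc
      have E := h (-(i:ℤ)-2) (-1)
      push_cast at E ih ⊢
      have h1 : (-(i:ℤ)-2) + -1 = -(i:ℤ)-2-1 := by ring
      have h2 : (-((i:ℤ)+2)) = -(i:ℤ)-2 := by ring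
      have h3 : (-((i:ℤ)+2)-1) = -(i:ℤ)-2-1 := by ring
      rw [h1] at E
      rw [h2] at ih
      rw [h3] at *
      apply mul_left_cancel₀ hne
      linear_combination (-1 : ℂ) * E + (-(i:ℂ) - 4) * ih - (2*(-(i:ℂ)-2) - 1) * fneg1
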